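/- Let f_0,...,f_{m-1} be continuous self-maps of a compact metric space (X,d) and φ continuous on X. Then lim_{r→0} P_r(f_0,...,f_{m-1},φ) = P(f_0,...,f_{m-1},φ): the topological r-pressure of the free semigroup action converges, as r→0, to the topological pressure of the free semigroup action. -/

import Mathlib

open Filter Topology

section FSG

variable {X : Type*}

/-- Apply the maps of the free semigroup action along a word; the first letter of the
list is applied first. -/
def fw {ι : Type*} (f : ι → X → X) (w : List ι) (x : X) : X :=
  w.foldl (fun y a => f a y) x

/-- The Birkhoff-type sum `(S_w φ)(x) = ∑_{w' ≤ w} φ(f_{w'} x)`. -/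
noncomputable def Sw {ι : Type*} (f : ι → X → X) (φ : X → ℝ) (w : List ι) (x : X) : ℝ :=
  ∑ i ∈ Finset.range w.length, φ (fw f (w.take i) x)

variable [MetricSpace X]

/-- `F` is a `(w, ε, r)`-spanning set for the free semigroup action. -/
def rSpan {ι : Type*} (f : ι → X → X) (w : List ι) (ε r : ℝ) (F : Finset X) : Prop :=
  ∀ x : X, ∃ y ∈ F, (1 - r) * w.length <
    (((Finset.range w.length).filter
      (fun i => dist (fw f (w.take i) x) (fw f (w.take i) y) < ε)).card : ℝ)

/-- `E` is a `(w, ε, r)`-separated set for the free semigroup action. -/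
def rSep {ι : Type*} (f : ι → X → X) (w : List ι) (ε r : ℝ) (E : Finset X) : Prop :=
  ∀ x ∈ E, ∀ y ∈ E, x ≠ y → r * w.length <
    (((Finset.range w.length).filter
      (fun i => ε ≤ dist (fw f (w.take i) x) (fw f (w.take i) y))).card : ℝ)

/-- `Q_w(f_0,…,f_{m-1},φ,ε,r)` (spanning-set version). -/
noncomputable def Qw {ι : Type*} (f : ι → X → X) (φ : X → ℝ) (w : List ι) (ε r : ℝ) : ℝ :=
  sInf {s : ℝ | ∃ F : Finset X, rSpan f w ε r F ∧ s = ∑ x ∈ F, Real.exp (Sw f φ w x)}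

/-- `Q_w^s(f_0,…,f_{m-1},φ,ε,r)` (separated-set version). -/
noncomputable def Qws {ι : Type*} (f : ι → X → X) (φ : X → ℝ) (w : List ι) (ε r : ℝ) : ℝ :=
  sSup {s : ℝ | ∃ E : Finset X, rSep f w ε r E ∧ s = ∑ x ∈ E, Real.exp (Sw f φ w x)}

/-- `Q_n(f_0,…,f_{m-1},φ,ε,r) = (1/m^n) ∑_{|w|=n} Q_w`. -/
noncomputable def Qn {ι : Type*} [Fintype ι] (f : ι → X → X) (φ : X → ℝ)
    (n : ℕ) (ε r : ℝ) : ℝ :=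
  (1 / (Fintype.card ι : ℝ) ^ n) * ∑ σ : Fin n → ι, Qw f φ (List.ofFn σ) ε r

/-- `Q_n^s(f_0,…,f_{m-1},φ,ε,r) = (1/m^n) ∑_{|w|=n} Q_w^s`. -/
noncomputable def Qns {ι : Type*} [Fintype ι] (f : ι → X → X) (φ : X → ℝ)
    (n : ℕ) (ε r : ℝ) : ℝ :=
  (1 / (Fintype.card ι : ℝ) ^ n) * ∑ σ : Fin n → ι, Qws f φ (List.ofFn σ) ε r

/-- The topological `r`-pressure of the free semigroup action (spanning sets);
the limit as `ε → 0` is realised as a supremum over `ε > 0`, the quantity being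
monotone in `ε`. -/
noncomputable def Pr {ι : Type*} [Fintype ι] (f : ι → X → X) (φ : X → ℝ) (r : ℝ) : EReal :=
  ⨆ ε ∈ Set.Ioi (0 : ℝ), atTop.limsup fun n : ℕ =>
    (((n : ℝ)⁻¹ * Real.log (Qn f φ n ε r) : ℝ) : EReal)

/-- `P^s_r(f_0,…,f_{m-1},φ,ε)`, the fixed-`ε` separated-set `r`-pressure. -/
noncomputable def Pse {ι : Type*} [Fintype ι] (f : ι → X → X) (φ : X → ℝ) (ε r : ℝ) : EReal :=
  atTop.limsup fun n : ℕ => (((n : ℝ)⁻¹ * Real.log (Qns f φ n ε r) : ℝ) : EReal)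

/-- The topological `r`-pressure of the free semigroup action (separated sets). -/
noncomputable def Ps {ι : Type*} [Fintype ι] (f : ι → X → X) (φ : X → ℝ) (r : ℝ) : EReal :=
  ⨆ ε ∈ Set.Ioi (0 : ℝ), Pse f φ ε r

/-- Liminf variant of the separated-set topological `r`-pressure. -/
noncomputable def PsInf {ι : Type*} [Fintype ι] (f : ι → X → X) (φ : X → ℝ) (r : ℝ) : EReal :=
  ⨆ ε ∈ Set.Ioi (0 : ℝ), atTop.liminf fun n : ℕ =>
    (((n : ℝ)⁻¹ * Real.log (Qns f φ n ε r) : ℝ) : EReal)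

/-- `F` is a `(w, ε)`-spanning set for the Bowen metric `d_w` of the free semigroup action. -/
def span0 {ι : Type*} (f : ι → X → X) (w : List ι) (ε : ℝ) (F : Finset X) : Prop :=
  ∀ x : X, ∃ y ∈ F, ∀ i < w.length,
    dist (fw f (w.take i) x) (fw f (w.take i) y) ≤ ε

/-- `E` is a `(w, ε)`-separated set for the Bowen metric `d_w`. -/
def sep0 {ι : Type*} (f : ι → X → X) (w : List ι) (ε : ℝ) (E : Finset X) : Prop :=
  ∀ x ∈ E, ∀ y ∈ E, x ≠ y → ∃ i < w.length,
    ε < dist (fw f (w.take i) x) (fw f (w.take i) y)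

noncomputable def Qw0 {ι : Type*} (f : ι → X → X) (φ : X → ℝ) (w : List ι) (ε : ℝ) : ℝ :=
  sInf {s : ℝ | ∃ F : Finset X, span0 f w ε F ∧ s = ∑ x ∈ F, Real.exp (Sw f φ w x)}

noncomputable def Qws0 {ι : Type*} (f : ι → X → X) (φ : X → ℝ) (w : List ι) (ε : ℝ) : ℝ :=
  sSup {s : ℝ | ∃ E : Finset X, sep0 f w ε E ∧ s = ∑ x ∈ E, Real.exp (Sw f φ w x)}

noncomputable def Qn0 {ι : Type*} [Fintype ι] (f : ι → X → X) (φ : X → ℝ) (n : ℕ) (ε : ℝ) : ℝ :=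
  (1 / (Fintype.card ι : ℝ) ^ n) * ∑ σ : Fin n → ι, Qw0 f φ (List.ofFn σ) ε

noncomputable def Qns0 {ι : Type*} [Fintype ι] (f : ι → X → X) (φ : X → ℝ) (n : ℕ) (ε : ℝ) : ℝ :=
  (1 / (Fintype.card ι : ℝ) ^ n) * ∑ σ : Fin n → ι, Qws0 f φ (List.ofFn σ) ε

/-- The topological pressure of the free semigroup action. -/
noncomputable def P0 {ι : Type*} [Fintype ι] (f : ι → X → X) (φ : X → ℝ) : EReal :=
  ⨆ ε ∈ Set.Ioi (0 : ℝ), atTop.limsup fun n : ℕ =>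
    (((n : ℝ)⁻¹ * Real.log (Qn0 f φ n ε) : ℝ) : EReal)

/-- `r_w(ε,r)`: the smallest cardinality of a `(w,ε,r)`-spanning set. -/
noncomputable def rSpanCard {ι : Type*} (f : ι → X → X) (w : List ι) (ε r : ℝ) : ℕ :=
  sInf {k : ℕ | ∃ F : Finset X, rSpan f w ε r F ∧ F.card = k}

/-- The topological `r`-entropy of the free semigroup action. -/
noncomputable def hrEnt {ι : Type*} [Fintype ι] (f : ι → X → X) (r : ℝ) : EReal :=
  ⨆ ε ∈ Set.Ioi (0 : ℝ), atTop.limsup fun n : ℕ =>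
    (((n : ℝ)⁻¹ * Real.log ((1 / (Fintype.card ι : ℝ) ^ n) *
      ∑ σ : Fin n → ι, (rSpanCard f (List.ofFn σ) ε r : ℝ)) : ℝ) : EReal)

end FSG
section AuxProofs

open Real Filter

variable {X : Type*} [MetricSpace X] [CompactSpace X] {m : ℕ}

lemma continuous_fw (f : Fin m → X → X) (hf : ∀ i, Continuous (f i)) (w : List (Fin m)) :
    Continuous (fw f w) := by
  induction w with
  | nil => exact continuous_id
  | cons a w ih =>
    have h : fw f (a :: w) = (fw f w) ∘ (f a) := by funext x; rfl
    rw [h]; exact ih.comp (hf a)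

/-- A finite set that is `δ`-dense simultaneously along all the Bowen-type coordinates of `w`. -/
lemma exists_net (f : Fin m → X → X) (hf : ∀ i, Continuous (f i)) (w : List (Fin m))
    {δ : ℝ} (hδ : 0 < δ) :
    ∃ F : Finset X, ∀ x : X, ∃ y ∈ F, ∀ i < w.length,
      dist (fw f (w.take i) x) (fw f (w.take i) y) < δ := by
  set U : X → Set X := fun y =>
    ⋂ i ∈ Finset.range w.length, (fw f (w.take i)) ⁻¹' Metric.ball (fw f (w.take i) y) δ with hU
  have hopen : ∀ y, IsOpen (U y) := fun y =>
    isOpen_biInter_finset fun i _ =>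
      (Metric.isOpen_ball).preimage (continuous_fw f hf _)
  have hcover : Set.univ ⊆ ⋃ y : X, U y := by
    intro x _
    refine Set.mem_iUnion.2 ⟨x, ?_⟩
    simp only [hU, Set.mem_iInter, Set.mem_preimage, Metric.mem_ball]
    intro i _
    simpa using hδ
  obtain ⟨t, ht⟩ := isCompact_univ.elim_finite_subcover U hopen hcover
  refine ⟨t, fun x => ?_⟩
  obtain ⟨y, hy, hxy⟩ := Set.mem_iUnion₂.1 (ht (Set.mem_univ x))
  refine ⟨y, hy, fun i hi => ?_⟩
  have := Set.mem_iInter₂.1 hxy i (Finset.mem_range.2 hi)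
  simpa [Metric.mem_ball] using this

lemma abs_Sw_le (f : Fin m → X → X) (φ : X → ℝ) {M : ℝ} (hM : ∀ z, |φ z| ≤ M)
    (w : List (Fin m)) (x : X) : |Sw f φ w x| ≤ w.length * M := by
  calc |Sw f φ w x| ≤ ∑ i ∈ Finset.range w.length, |φ (fw f (w.take i) x)| :=
        Finset.abs_sum_le_sum_abs _ _
    _ ≤ ∑ _i ∈ Finset.range w.length, M := Finset.sum_le_sum fun i _ => hM _
    _ = w.length * M := by simp [mul_comm]

lemma sum_exp_nonneg (f : Fin m → X → X) (φ : X → ℝ) (w : List (Fin m)) (F : Finset X) :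
    0 ≤ ∑ z ∈ F, Real.exp (Sw f φ w z) :=
  Finset.sum_nonneg fun z _ => (Real.exp_pos _).le

lemma le_sum_exp (f : Fin m → X → X) (φ : X → ℝ) {M : ℝ} (hM : ∀ z, |φ z| ≤ M)
    (w : List (Fin m)) {F : Finset X} {y : X} (hy : y ∈ F) :
    Real.exp (-(w.length * M)) ≤ ∑ z ∈ F, Real.exp (Sw f φ w z) := by
  have h1 : -((w.length : ℝ) * M) ≤ Sw f φ w y := by
    have := abs_Sw_le f φ hM w y
    have := neg_abs_le (Sw f φ w y)
    linarith
  calc Real.exp (-(w.length * M)) ≤ Real.exp (Sw f φ w y) := Real.exp_le_exp.2 h1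
    _ ≤ ∑ z ∈ F, Real.exp (Sw f φ w z) :=
        Finset.single_le_sum (fun z _ => (Real.exp_pos _).le) hy

lemma net_rSpan (f : Fin m → X → X) {w : List (Fin m)} {ε r : ℝ} (hr : 0 < r)
    (hw : 1 ≤ w.length) {F : Finset X}
    (hF : ∀ x : X, ∃ y ∈ F, ∀ i < w.length,
      dist (fw f (w.take i) x) (fw f (w.take i) y) < ε) :
    rSpan f w ε r F := by
  intro x
  obtain ⟨y, hy, hd⟩ := hF x
  refine ⟨y, hy, ?_⟩
  have hfil : (Finset.range w.length).filter
      (fun i => dist (fw f (w.take i) x) (fw f (w.take i) y) < ε)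
      = Finset.range w.length :=
    Finset.filter_true_of_mem fun i hi => hd i (Finset.mem_range.1 hi)
  rw [hfil, Finset.card_range]
  have hn : (1 : ℝ) ≤ w.length := by exact_mod_cast hw
  nlinarith

lemma net_span0 (f : Fin m → X → X) {w : List (Fin m)} {ε : ℝ} {F : Finset X}
    (hF : ∀ x : X, ∃ y ∈ F, ∀ i < w.length,
      dist (fw f (w.take i) x) (fw f (w.take i) y) < ε) :
    span0 f w ε F := by
  intro x
  obtain ⟨y, hy, hd⟩ := hF x
  exact ⟨y, hy, fun i hi => (hd i hi).le⟩

lemma Qw_bddBelow (f : Fin m → X → X) (φ : X → ℝ) (w : List (Fin m)) (ε r : ℝ) :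
    BddBelow {s : ℝ | ∃ F : Finset X, rSpan f w ε r F ∧ s = ∑ x ∈ F, Real.exp (Sw f φ w x)} := by
  refine ⟨0, ?_⟩
  rintro t ⟨F, _, rfl⟩
  exact sum_exp_nonneg f φ w F

lemma Qw0_bddBelow (f : Fin m → X → X) (φ : X → ℝ) (w : List (Fin m)) (ε : ℝ) :
    BddBelow {s : ℝ | ∃ F : Finset X, span0 f w ε F ∧ s = ∑ x ∈ F, Real.exp (Sw f φ w x)} := by
  refine ⟨0, ?_⟩
  rintro t ⟨F, _, rfl⟩
  exact sum_exp_nonneg f φ w F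

lemma Qw0_lower (f : Fin m → X → X) (hf : ∀ i, Continuous (f i)) (φ : X → ℝ)
    (hX : Nonempty X) {M ε : ℝ} (hM : ∀ z, |φ z| ≤ M) (hε : 0 < ε) (w : List (Fin m)) :
    Real.exp (-(w.length * M)) ≤ Qw0 f φ w ε := by
  obtain ⟨F, hF⟩ := exists_net f hf w hε
  refine le_csInf ⟨_, F, net_span0 f hF, rfl⟩ ?_
  rintro t ⟨G, hG, rfl⟩
  obtain ⟨y, hy, -⟩ := hG (Classical.arbitrary X)
  exact le_sum_exp f φ hM w hy

lemma Qw_lower (f : Fin m → X → X) (hf : ∀ i, Continuous (f i)) (φ : X → ℝ)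
    (hX : Nonempty X) {M ε r : ℝ} (hM : ∀ z, |φ z| ≤ M) (hε : 0 < ε) (hr : 0 < r)
    {w : List (Fin m)} (hw : 1 ≤ w.length) :
    Real.exp (-(w.length * M)) ≤ Qw f φ w ε r := by
  obtain ⟨F, hF⟩ := exists_net f hf w hε
  refine le_csInf ⟨_, F, net_rSpan f hr hw hF, rfl⟩ ?_
  rintro t ⟨G, hG, rfl⟩
  obtain ⟨y, hy, -⟩ := hG (Classical.arbitrary X)
  exact le_sum_exp f φ hM w hy

lemma Qw_le_Qw0 (f : Fin m → X → X) (hf : ∀ i, Continuous (f i)) (φ : X → ℝ)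
    {ε ε' r : ℝ} (hε' : 0 < ε') (hee : ε' < ε) (hr : 0 < r)
    {w : List (Fin m)} (hw : 1 ≤ w.length) :
    Qw f φ w ε r ≤ Qw0 f φ w ε' := by
  obtain ⟨F, hF⟩ := exists_net f hf w hε'
  refine csInf_le_csInf (Qw_bddBelow f φ w ε r) ⟨_, F, net_span0 f hF, rfl⟩ ?_
  rintro t ⟨G, hG, rfl⟩
  refine ⟨G, ?_, rfl⟩
  intro x
  obtain ⟨y, hy, hd⟩ := hG x
  refine ⟨y, hy, ?_⟩
  have hfil : (Finset.range w.length).filter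
      (fun i => dist (fw f (w.take i) x) (fw f (w.take i) y) < ε)
      = Finset.range w.length :=
    Finset.filter_true_of_mem fun i hi => lt_of_le_of_lt (hd i (Finset.mem_range.1 hi)) hee
  rw [hfil, Finset.card_range]
  have hn : (1 : ℝ) ≤ w.length := by exact_mod_cast hw
  nlinarith

lemma Qw0_anti (f : Fin m → X → X) (hf : ∀ i, Continuous (f i)) (φ : X → ℝ)
    {ε ε' : ℝ} (hε : 0 < ε) (hee : ε ≤ ε') (w : List (Fin m)) :
    Qw0 f φ w ε' ≤ Qw0 f φ w ε := by
  obtain ⟨F, hF⟩ := exists_net f hf w hε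
  refine csInf_le_csInf (Qw0_bddBelow f φ w ε') ⟨_, F, net_span0 f hF, rfl⟩ ?_
  rintro t ⟨G, hG, rfl⟩
  refine ⟨G, ?_, rfl⟩
  intro x
  obtain ⟨y, hy, hd⟩ := hG x
  exact ⟨y, hy, fun i hi => (hd i hi).trans hee⟩

end AuxProofs
set_option linter.unusedSectionVars false
set_option linter.unusedVariables false

section AuxProofs2

open Real Filter

lemma choose_le_bound {x : ℝ} (hx0 : 0 < x) (hx1 : x < 1) {n j : ℕ} (hj : j ≤ n) :
    (n.choose j : ℝ) ≤ x⁻¹ ^ j * (1 - x)⁻¹ ^ n := by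
  have hy : 0 < 1 - x := by linarith
  have hterm : x ^ j * (1 - x) ^ (n - j) * (n.choose j : ℝ) ≤ 1 := by
    have hsum := (Commute.all x (1 - x)).add_pow n
    have h1 : ((x + (1 - x)) : ℝ) ^ n = 1 := by norm_num
    have h2 : x ^ j * (1 - x) ^ (n - j) * (n.choose j : ℝ)
        ≤ ∑ i ∈ Finset.range (n + 1), x ^ i * (1 - x) ^ (n - i) * (n.choose i : ℝ) :=
      Finset.single_le_sum (f := fun i => x ^ i * (1 - x) ^ (n - i) * (n.choose i : ℝ))
        (fun i _ => by positivity) (Finset.mem_range.2 (Nat.lt_succ_of_le hj))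
    calc x ^ j * (1 - x) ^ (n - j) * (n.choose j : ℝ)
        ≤ ∑ i ∈ Finset.range (n + 1), x ^ i * (1 - x) ^ (n - i) * (n.choose i : ℝ) := h2
      _ = ((x + (1 - x)) : ℝ) ^ n := hsum.symm
      _ = 1 := h1
  have hp : 0 < x ^ j * (1 - x) ^ (n - j) := by positivity
  have hstep : (n.choose j : ℝ) ≤ (x ^ j * (1 - x) ^ (n - j))⁻¹ := by
    calc (n.choose j : ℝ) = (x ^ j * (1 - x) ^ (n - j))⁻¹ * (x ^ j * (1 - x) ^ (n - j)
          * (n.choose j : ℝ)) := by field_simp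
      _ ≤ (x ^ j * (1 - x) ^ (n - j))⁻¹ * 1 :=
          mul_le_mul_of_nonneg_left hterm (by positivity)
      _ = (x ^ j * (1 - x) ^ (n - j))⁻¹ := mul_one _
  have heq : (x ^ j * (1 - x) ^ (n - j))⁻¹ = x⁻¹ ^ j * (1 - x)⁻¹ ^ (n - j) := by
    rw [mul_inv, inv_pow, inv_pow]
  have hmono : (1 - x)⁻¹ ^ (n - j) ≤ (1 - x)⁻¹ ^ n := by
    have h1x : 1 ≤ (1 - x)⁻¹ := by
      rw [le_inv_comm₀ one_pos hy] <;> linarith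
    exact pow_le_pow_right₀ h1x (Nat.sub_le _ _)
  calc (n.choose j : ℝ) ≤ x⁻¹ ^ j * (1 - x)⁻¹ ^ (n - j) := by rw [← heq]; exact hstep
    _ ≤ x⁻¹ ^ j * (1 - x)⁻¹ ^ n := by
        apply mul_le_mul_of_nonneg_left hmono (by positivity)

lemma sum_inv_pow_le {x : ℝ} (hx0 : 0 < x) (hx1 : x < 1) (k : ℕ) :
    ∑ j ∈ Finset.range (k + 1), x⁻¹ ^ j ≤ x⁻¹ ^ k * (1 - x)⁻¹ := by
  have hy : 0 < 1 - x := by linarith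
  induction k with
  | zero =>
    have h1x : (1:ℝ) ≤ (1 - x)⁻¹ := by rw [le_inv_comm₀ one_pos hy]; linarith
    simpa using h1x
  | succ k ih =>
    rw [Finset.sum_range_succ]
    have heq : x⁻¹ ^ k * (1 - x)⁻¹ + x⁻¹ ^ (k + 1) = x⁻¹ ^ (k + 1) * (1 - x)⁻¹ := by
      have hx : x * x⁻¹ = 1 := mul_inv_cancel₀ hx0.ne'
      have h2 : (1 - x) * (1 - x)⁻¹ = 1 := mul_inv_cancel₀ hy.ne'
      linear_combination (-(x⁻¹ ^ k * (1 - x)⁻¹)) * hx + (-(x⁻¹ ^ k * x⁻¹)) * h2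
    calc ∑ j ∈ Finset.range (k + 1), x⁻¹ ^ j + x⁻¹ ^ (k + 1)
        ≤ x⁻¹ ^ k * (1 - x)⁻¹ + x⁻¹ ^ (k + 1) := by linarith
      _ = x⁻¹ ^ (k + 1) * (1 - x)⁻¹ := heq

lemma card_A_le {x : ℝ} (hx0 : 0 < x) (hx1 : x < 1) (n k : ℕ) :
    ((((Finset.range n).powerset.filter (fun A => n - A.card ≤ k)).card : ℝ))
      ≤ x⁻¹ ^ k * (1 - x)⁻¹ ^ (n + 1) := by
  classical
  have hy : 0 < 1 - x := by linarith
  set 𝒜 := (Finset.range n).powerset.filter (fun A => n - A.card ≤ k) with h𝒜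
  have hsub : 𝒜 ⊆ (Finset.Icc (n - k) n).biUnion
      (fun c => Finset.powersetCard c (Finset.range n)) := by
    intro A hA
    rw [h𝒜, Finset.mem_filter, Finset.mem_powerset] at hA
    obtain ⟨hA1, hA2⟩ := hA
    have hcle : A.card ≤ n := by
      simpa using Finset.card_le_card hA1
    refine Finset.mem_biUnion.2 ⟨A.card, Finset.mem_Icc.2 ⟨by omega, hcle⟩, ?_⟩
    exact Finset.mem_powersetCard.2 ⟨hA1, rfl⟩
  have hcard1 : 𝒜.card ≤ ∑ c ∈ Finset.Icc (n - k) n, n.choose c := by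
    calc 𝒜.card ≤ ((Finset.Icc (n - k) n).biUnion
        (fun c => Finset.powersetCard c (Finset.range n))).card := Finset.card_le_card hsub
      _ ≤ ∑ c ∈ Finset.Icc (n - k) n, (Finset.powersetCard c (Finset.range n)).card :=
        Finset.card_biUnion_le
      _ = ∑ c ∈ Finset.Icc (n - k) n, n.choose c := by
        refine Finset.sum_congr rfl fun c _ => ?_
        rw [Finset.card_powersetCard, Finset.card_range]
  have hcast : (𝒜.card : ℝ) ≤ ∑ c ∈ Finset.Icc (n - k) n, (n.choose c : ℝ) := by
    exact_mod_cast le_trans (Nat.cast_le.2 hcard1) (by push_cast; exact le_refl _)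
  have hstep : ∑ c ∈ Finset.Icc (n - k) n, (n.choose c : ℝ)
      ≤ (∑ c ∈ Finset.Icc (n - k) n, x⁻¹ ^ (n - c)) * (1 - x)⁻¹ ^ n := by
    rw [Finset.sum_mul]
    refine Finset.sum_le_sum fun c hc => ?_
    obtain ⟨hc1, hc2⟩ := Finset.mem_Icc.1 hc
    have hsymm : n.choose c = n.choose (n - c) := (Nat.choose_symm hc2).symm
    rw [hsymm]
    exact choose_le_bound hx0 hx1 (Nat.sub_le _ _)
  have hgeo : ∑ c ∈ Finset.Icc (n - k) n, x⁻¹ ^ (n - c) ≤ x⁻¹ ^ k * (1 - x)⁻¹ := by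
    have himg : ∑ c ∈ Finset.Icc (n - k) n, x⁻¹ ^ (n - c)
        = ∑ j ∈ (Finset.Icc (n - k) n).image (fun c => n - c), x⁻¹ ^ j := by
      rw [Finset.sum_image]
      intro a ha b hb hab
      rw [Finset.mem_coe, Finset.mem_Icc] at ha hb
      simp only at hab
      omega
    rw [himg]
    have hsub2 : (Finset.Icc (n - k) n).image (fun c => n - c) ⊆ Finset.range (k + 1) := by
      intro j hj
      obtain ⟨c, hc, rfl⟩ := Finset.mem_image.1 hj
      rw [Finset.mem_Icc] at hc
      exact Finset.mem_range.2 (by omega)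
    calc ∑ j ∈ (Finset.Icc (n - k) n).image (fun c => n - c), x⁻¹ ^ j
        ≤ ∑ j ∈ Finset.range (k + 1), x⁻¹ ^ j :=
          Finset.sum_le_sum_of_subset_of_nonneg hsub2 (fun j _ _ => by positivity)
      _ ≤ x⁻¹ ^ k * (1 - x)⁻¹ := sum_inv_pow_le hx0 hx1 k
  calc (𝒜.card : ℝ) ≤ ∑ c ∈ Finset.Icc (n - k) n, (n.choose c : ℝ) := hcast
    _ ≤ (∑ c ∈ Finset.Icc (n - k) n, x⁻¹ ^ (n - c)) * (1 - x)⁻¹ ^ n := hstep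
    _ ≤ (x⁻¹ ^ k * (1 - x)⁻¹) * (1 - x)⁻¹ ^ n := by
        apply mul_le_mul_of_nonneg_right hgeo (by positivity)
    _ = x⁻¹ ^ k * (1 - x)⁻¹ ^ (n + 1) := by ring

end AuxProofs2
section AuxProofs3

open Real Filter

variable {X : Type*} [MetricSpace X] [CompactSpace X] {m : ℕ}

lemma exists_max_sep (f : Fin m → X → X) {ε : ℝ} (hε : 0 < ε)
    (s : Finset X) (hs : ∀ z : X, ∃ c ∈ s, dist z c < ε / 2) (w : List (Fin m)) :
    ∃ E : Finset X, sep0 f w ε E ∧ span0 f w ε E := by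
  classical
  choose c hcs hcd using hs
  -- cardinality of separated sets is bounded
  have hbound : ∀ E : Finset X, sep0 f w ε E → E.card ≤ s.card ^ w.length := by
    intro E hE
    have hinj : Set.InjOn (fun z => (fun i : Fin w.length => c (fw f (w.take i.1) z)))
        (E : Set X) := by
      intro z hz z' hz' hgg
      by_contra hne
      obtain ⟨i, hi, hd⟩ := hE z hz z' hz' hne
      have hci : c (fw f (w.take i) z) = c (fw f (w.take i) z') := by
        have h := congrFun hgg (⟨i, hi⟩ : Fin w.length)
        simpa using h
      have h1 := hcd (fw f (w.take i) z)
      have h2 := hcd (fw f (w.take i) z')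
      have htri : dist (fw f (w.take i) z) (fw f (w.take i) z')
          ≤ dist (fw f (w.take i) z) (c (fw f (w.take i) z))
            + dist (c (fw f (w.take i) z)) (fw f (w.take i) z') :=
        dist_triangle _ _ _
      rw [hci, dist_comm (c (fw f (w.take i) z'))] at htri
      rw [hci] at h1
      linarith
    have hcle := Finset.card_le_card_of_injOn (s := E)
      (t := Fintype.piFinset fun _ : Fin w.length => s)
      (fun z => (fun i : Fin w.length => c (fw f (w.take i.1) z)))
      (fun z _ => Fintype.mem_piFinset.2 fun i => hcs _) hinj
    calc E.card ≤ (Fintype.piFinset fun _ : Fin w.length => s).card := hcle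
      _ = s.card ^ w.length := by
        rw [Fintype.card_piFinset]
        simp
  set S := {k : ℕ | ∃ E : Finset X, sep0 f w ε E ∧ E.card = k} with hS
  have hSne : S.Nonempty := ⟨0, ∅, fun a ha => absurd ha (Finset.notMem_empty a), rfl⟩
  have hSbdd : BddAbove S := by
    refine ⟨s.card ^ w.length, ?_⟩
    rintro k ⟨E, hE, rfl⟩
    exact hbound E hE
  obtain ⟨E, hEsep, hEcard⟩ := Nat.sSup_mem hSne hSbdd
  refine ⟨E, hEsep, ?_⟩
  intro z
  by_contra hcon
  push_neg at hcon
  have hzE : z ∉ E := by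
    intro hzE
    obtain ⟨i, hi, hd⟩ := hcon z hzE
    rw [dist_self] at hd
    linarith
  have hsep' : sep0 f w ε (insert z E) := by
    intro a ha b hb hab
    rcases Finset.mem_insert.1 ha with rfl | haE
    · rcases Finset.mem_insert.1 hb with rfl | hbE
      · exact absurd rfl hab
      · obtain ⟨i, hi, hd⟩ := hcon b hbE
        exact ⟨i, hi, hd⟩
    · rcases Finset.mem_insert.1 hb with rfl | hbE
      · obtain ⟨i, hi, hd⟩ := hcon a haE
        exact ⟨i, hi, by rw [dist_comm]; exact hd⟩
      · exact hEsep a haE b hbE hab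
  have hmem : (E.card + 1) ∈ S := by
    refine ⟨insert z E, hsep', ?_⟩
    rw [Finset.card_insert_of_notMem hzE]
  have := le_csSup hSbdd hmem
  rw [hEcard] at this
  omega

end AuxProofs3
section AuxProofs4

open Real Filter

variable {X : Type*} [MetricSpace X] [CompactSpace X] {m : ℕ}

lemma sum_sep_le (f : Fin m → X → X) (φ : X → ℝ) {ε r x M V : ℝ}
    (hε : 0 < ε) (hr : 0 < r) (hx0 : 0 < x) (hx1 : x < 1)
    (hM0 : 0 ≤ M) (hM : ∀ z, |φ z| ≤ M) (hV0 : 0 ≤ V)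
    (hV : ∀ a b : X, dist a b ≤ ε → |φ a - φ b| ≤ V)
    (s : Finset X) (hsne : s.Nonempty) (hs : ∀ z : X, ∃ c ∈ s, dist z c < ε / 2)
    (w : List (Fin m)) {E F : Finset X} (hE : sep0 f w ε E) (hF : rSpan f w (ε / 2) r F) :
    ∑ z ∈ E, Real.exp (Sw f φ w z) ≤
      (x⁻¹ ^ ⌊r * w.length⌋₊ * (1 - x)⁻¹ ^ (w.length + 1) * (s.card : ℝ) ^ ⌊r * w.length⌋₊ *
        Real.exp (w.length * V + 2 * M * ⌊r * w.length⌋₊)) *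
      ∑ z ∈ F, Real.exp (Sw f φ w z) := by
  classical
  set n := w.length with hn
  set k := ⌊r * n⌋₊ with hk
  choose c hcs hcd using hs
  choose Y hYF hYP using hF
  set A : X → Finset ℕ := fun z => (Finset.range n).filter
    (fun i => dist (fw f (w.take i) z) (fw f (w.take i) (Y z)) < ε / 2) with hA
  set 𝒜 : Finset (Finset ℕ) := (Finset.range n).powerset.filter (fun B => n - B.card ≤ k)
    with h𝒜
  set Φ : X → X × Finset ℕ := fun z => (Y z, A z) with hΦ
  set D : ℝ := n * V + 2 * M * k with hD
  -- Φ maps E into F ×ˢ 𝒜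
  have hmaps : ∀ z ∈ E, Φ z ∈ F ×ˢ 𝒜 := by
    intro z _
    rw [Finset.mem_product]
    refine ⟨hYF z, ?_⟩
    rw [h𝒜, Finset.mem_filter, Finset.mem_powerset]
    have hsubA : A z ⊆ Finset.range n := Finset.filter_subset _ _
    refine ⟨hsubA, ?_⟩
    have hcardle : (A z).card ≤ n := by
      simpa using Finset.card_le_card hsubA
    have hgt : (1 - r) * (n : ℝ) < ((A z).card : ℝ) := hYP z
    apply Nat.le_floor
    have : ((n - (A z).card : ℕ) : ℝ) = (n : ℝ) - ((A z).card : ℝ) := by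
      push_cast [Nat.cast_sub hcardle]; ring
    rw [this]
    nlinarith
  -- the per-fiber bound
  have hfiber : ∀ p ∈ F ×ˢ 𝒜,
      (∑ z ∈ E.filter (fun z => Φ z = p), Real.exp (Sw f φ w z))
        ≤ (s.card : ℝ) ^ k * Real.exp (Sw f φ w p.1 + D) := by
    rintro ⟨y, B⟩ hp
    rw [Finset.mem_product, h𝒜, Finset.mem_filter, Finset.mem_powerset] at hp
    obtain ⟨hyF, hBsub, hBcard⟩ := hp
    set fib := E.filter (fun z => Φ z = (y, B)) with hfib
    have hfibmem : ∀ z ∈ fib, z ∈ E ∧ Y z = y ∧ A z = B := by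
      intro z hz
      rw [hfib, Finset.mem_filter, hΦ, Prod.mk.injEq] at hz
      exact ⟨hz.1, hz.2.1, hz.2.2⟩
    -- pointwise bound on Sw
    have hSw : ∀ z ∈ fib, Sw f φ w z ≤ Sw f φ w y + D := by
      intro z hz
      obtain ⟨hzE, hYz, hAz⟩ := hfibmem z hz
      have hdiff : Sw f φ w z - Sw f φ w y
          = ∑ i ∈ Finset.range n, (φ (fw f (w.take i) z) - φ (fw f (w.take i) y)) := by
        rw [Sw, Sw, ← Finset.sum_sub_distrib]
      have hsplit : ∑ i ∈ Finset.range n, (φ (fw f (w.take i) z) - φ (fw f (w.take i) y))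
          = ∑ i ∈ Finset.range n \ B, (φ (fw f (w.take i) z) - φ (fw f (w.take i) y))
            + ∑ i ∈ B, (φ (fw f (w.take i) z) - φ (fw f (w.take i) y)) :=
        (Finset.sum_sdiff hBsub).symm
      have h1 : ∑ i ∈ B, (φ (fw f (w.take i) z) - φ (fw f (w.take i) y)) ≤ n * V := by
        have hB : ∀ i ∈ B, φ (fw f (w.take i) z) - φ (fw f (w.take i) y) ≤ V := by
          intro i hi
          rw [← hAz, hA, Finset.mem_filter] at hi
          have hdist : dist (fw f (w.take i) z) (fw f (w.take i) y) ≤ ε := by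
            have := hi.2
            rw [hYz] at this
            linarith
          have := hV _ _ hdist
          have := le_abs_self (φ (fw f (w.take i) z) - φ (fw f (w.take i) y))
          linarith
        calc ∑ i ∈ B, (φ (fw f (w.take i) z) - φ (fw f (w.take i) y))
            ≤ ∑ _i ∈ B, V := Finset.sum_le_sum hB
          _ = B.card * V := by rw [Finset.sum_const, nsmul_eq_mul]
          _ ≤ n * V := by
              have : (B.card : ℝ) ≤ n := by
                exact_mod_cast by simpa using Finset.card_le_card hBsub
              exact mul_le_mul_of_nonneg_right this hV0
      have h2 : ∑ i ∈ Finset.range n \ B, (φ (fw f (w.take i) z) - φ (fw f (w.take i) y))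
          ≤ 2 * M * k := by
        have hB : ∀ i ∈ Finset.range n \ B,
            φ (fw f (w.take i) z) - φ (fw f (w.take i) y) ≤ 2 * M := by
          intro i _
          have ha := hM (fw f (w.take i) z)
          have hb := hM (fw f (w.take i) y)
          have ha' := abs_le.1 ha
          have hb' := abs_le.1 hb
          linarith [ha'.1, ha'.2, hb'.1, hb'.2]
        have hcard : ((Finset.range n \ B).card : ℝ) ≤ k := by
          rw [Finset.card_sdiff_of_subset hBsub, Finset.card_range]
          exact_mod_cast hBcard
        calc ∑ i ∈ Finset.range n \ B, (φ (fw f (w.take i) z) - φ (fw f (w.take i) y))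
            ≤ ∑ _i ∈ Finset.range n \ B, 2 * M := Finset.sum_le_sum hB
          _ = (Finset.range n \ B).card * (2 * M) := by rw [Finset.sum_const, nsmul_eq_mul]
          _ ≤ k * (2 * M) := mul_le_mul_of_nonneg_right hcard (by linarith)
          _ = 2 * M * k := by ring
      rw [hD]
      have := hdiff
      rw [hsplit] at this
      linarith
    -- cardinality of the fiber
    have hcard : (fib.card : ℝ) ≤ (s.card : ℝ) ^ k := by
      have hinj : Set.InjOn
          (fun z => (fun i (_ : i ∈ Finset.range n \ B) => c (fw f (w.take i) z)))
          (fib : Set X) := by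
        intro z hz z' hz' hgg
        by_contra hne
        obtain ⟨hzE, hYz, hAz⟩ := hfibmem z hz
        obtain ⟨hzE', hYz', hAz'⟩ := hfibmem z' hz'
        obtain ⟨i, hi, hd⟩ := hE z hzE z' hzE' hne
        by_cases hiB : i ∈ B
        · have hz1 : dist (fw f (w.take i) z) (fw f (w.take i) y) < ε / 2 := by
            have := hiB
            rw [← hAz, hA, Finset.mem_filter] at this
            rw [← hYz]; exact this.2
          have hz2 : dist (fw f (w.take i) z') (fw f (w.take i) y) < ε / 2 := by
            have := hiB
            rw [← hAz', hA, Finset.mem_filter] at this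
            rw [← hYz']; exact this.2
          have := dist_triangle (fw f (w.take i) z) (fw f (w.take i) y) (fw f (w.take i) z')
          rw [dist_comm (fw f (w.take i) y)] at this
          linarith
        · have him : i ∈ Finset.range n \ B :=
            Finset.mem_sdiff.2 ⟨Finset.mem_range.2 hi, hiB⟩
          have hci : c (fw f (w.take i) z) = c (fw f (w.take i) z') := by
            have h := congrFun (congrFun hgg i) him
            simpa using h
          have h1 := hcd (fw f (w.take i) z)
          have h2 := hcd (fw f (w.take i) z')
          have htri : dist (fw f (w.take i) z) (fw f (w.take i) z')
              ≤ dist (fw f (w.take i) z) (c (fw f (w.take i) z))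
                + dist (c (fw f (w.take i) z)) (fw f (w.take i) z') :=
            dist_triangle _ _ _
          rw [hci, dist_comm (c (fw f (w.take i) z'))] at htri
          rw [hci] at h1
          linarith
      have hle := Finset.card_le_card_of_injOn (s := fib)
        (t := (Finset.range n \ B).pi (fun _ => s))
        (fun z => (fun i (_ : i ∈ Finset.range n \ B) => c (fw f (w.take i) z)))
        (fun z _ => Finset.mem_pi.2 fun i _ => hcs _) hinj
      have hpicard : ((Finset.range n \ B).pi (fun _ => s)).card
          = s.card ^ (Finset.range n \ B).card := by
        rw [Finset.card_pi, Finset.prod_const]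
      have hkb : (Finset.range n \ B).card ≤ k := by
        rw [Finset.card_sdiff_of_subset hBsub, Finset.card_range]; exact hBcard
      have : fib.card ≤ s.card ^ k := by
        calc fib.card ≤ s.card ^ (Finset.range n \ B).card := by rw [← hpicard]; exact hle
          _ ≤ s.card ^ k := Nat.pow_le_pow_right (Finset.card_pos.2 hsne) hkb
      exact_mod_cast this
    -- combine
    calc ∑ z ∈ fib, Real.exp (Sw f φ w z)
        ≤ ∑ _z ∈ fib, Real.exp (Sw f φ w y + D) :=
          Finset.sum_le_sum fun z hz => Real.exp_le_exp.2 (hSw z hz)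
      _ = fib.card * Real.exp (Sw f φ w y + D) := by rw [Finset.sum_const, nsmul_eq_mul]
      _ ≤ (s.card : ℝ) ^ k * Real.exp (Sw f φ w y + D) :=
          mul_le_mul_of_nonneg_right hcard (Real.exp_pos _).le
  -- sum over fibers
  have htotal : ∑ z ∈ E, Real.exp (Sw f φ w z)
      ≤ ∑ p ∈ F ×ˢ 𝒜, (s.card : ℝ) ^ k * Real.exp (Sw f φ w p.1 + D) := by
    rw [← Finset.sum_fiberwise_of_maps_to hmaps (fun z => Real.exp (Sw f φ w z))]
    exact Finset.sum_le_sum hfiber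
  have hprod : ∑ p ∈ F ×ˢ 𝒜, (s.card : ℝ) ^ k * Real.exp (Sw f φ w p.1 + D)
      = (𝒜.card : ℝ) * (s.card : ℝ) ^ k * Real.exp D * ∑ z ∈ F, Real.exp (Sw f φ w z) := by
    rw [Finset.sum_product]
    simp only [Finset.sum_const, nsmul_eq_mul, Real.exp_add]
    rw [Finset.mul_sum]
    refine Finset.sum_congr rfl fun y _ => ?_
    ring
  have hAcard : (𝒜.card : ℝ) ≤ x⁻¹ ^ k * (1 - x)⁻¹ ^ (n + 1) := card_A_le hx0 hx1 n k
  calc ∑ z ∈ E, Real.exp (Sw f φ w z)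
      ≤ (𝒜.card : ℝ) * (s.card : ℝ) ^ k * Real.exp D * ∑ z ∈ F, Real.exp (Sw f φ w z) := by
        rw [← hprod]; exact htotal
    _ ≤ (x⁻¹ ^ k * (1 - x)⁻¹ ^ (n + 1)) * (s.card : ℝ) ^ k * Real.exp D
          * ∑ z ∈ F, Real.exp (Sw f φ w z) := by
        have hnn : (0:ℝ) ≤ (s.card : ℝ) ^ k * Real.exp D
            * ∑ z ∈ F, Real.exp (Sw f φ w z) := by
          have := sum_exp_nonneg f φ w F
          positivity
        have h1 : (𝒜.card : ℝ) * ((s.card : ℝ) ^ k * Real.exp D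
              * ∑ z ∈ F, Real.exp (Sw f φ w z))
            ≤ (x⁻¹ ^ k * (1 - x)⁻¹ ^ (n + 1)) * ((s.card : ℝ) ^ k * Real.exp D
              * ∑ z ∈ F, Real.exp (Sw f φ w z)) :=
          mul_le_mul_of_nonneg_right hAcard hnn
        calc (𝒜.card : ℝ) * (s.card : ℝ) ^ k * Real.exp D * ∑ z ∈ F, Real.exp (Sw f φ w z)
            = (𝒜.card : ℝ) * ((s.card : ℝ) ^ k * Real.exp D
              * ∑ z ∈ F, Real.exp (Sw f φ w z)) := by ring
          _ ≤ (x⁻¹ ^ k * (1 - x)⁻¹ ^ (n + 1)) * ((s.card : ℝ) ^ k * Real.exp D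
              * ∑ z ∈ F, Real.exp (Sw f φ w z)) := h1
          _ = (x⁻¹ ^ k * (1 - x)⁻¹ ^ (n + 1)) * (s.card : ℝ) ^ k * Real.exp D
              * ∑ z ∈ F, Real.exp (Sw f φ w z) := by ring
    _ = (x⁻¹ ^ k * (1 - x)⁻¹ ^ (n + 1) * (s.card : ℝ) ^ k * Real.exp (n * V + 2 * M * k))
          * ∑ z ∈ F, Real.exp (Sw f φ w z) := by rw [hD]

end AuxProofs4
section AuxProofs5

open Real Filter

variable {X : Type*} [MetricSpace X] [CompactSpace X] {m : ℕ}

lemma Qw0_le_key (f : Fin m → X → X) (hf : ∀ i, Continuous (f i)) (φ : X → ℝ)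
    (hX : Nonempty X) {ε r x M V : ℝ}
    (hε : 0 < ε) (hr : 0 < r) (hx0 : 0 < x) (hx1 : x < 1)
    (hM0 : 0 ≤ M) (hM : ∀ z, |φ z| ≤ M) (hV0 : 0 ≤ V)
    (hV : ∀ a b : X, dist a b ≤ ε → |φ a - φ b| ≤ V)
    (s : Finset X) (hsne : s.Nonempty) (hs : ∀ z : X, ∃ c ∈ s, dist z c < ε / 2)
    {w : List (Fin m)} (hw : 1 ≤ w.length) :
    Qw0 f φ w ε ≤
      (x⁻¹ ^ ⌊r * w.length⌋₊ * (1 - x)⁻¹ ^ (w.length + 1) * (s.card : ℝ) ^ ⌊r * w.length⌋₊ *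
        Real.exp (w.length * V + 2 * M * ⌊r * w.length⌋₊)) * Qw f φ w (ε / 2) r := by
  classical
  set B : ℝ := x⁻¹ ^ ⌊r * w.length⌋₊ * (1 - x)⁻¹ ^ (w.length + 1)
      * (s.card : ℝ) ^ ⌊r * w.length⌋₊ *
      Real.exp (w.length * V + 2 * M * ⌊r * w.length⌋₊) with hB
  have hscard : (0:ℝ) < s.card := by exact_mod_cast Finset.card_pos.2 hsne
  have hBpos : 0 < B := by
    rw [hB]
    have h1x : (0:ℝ) < 1 - x := by linarith
    positivity
  obtain ⟨E, hEsep, hEspan⟩ := exists_max_sep f hε s hs w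
  have hQw0E : Qw0 f φ w ε ≤ ∑ z ∈ E, Real.exp (Sw f φ w z) :=
    csInf_le (Qw0_bddBelow f φ w ε) ⟨E, hEspan, rfl⟩
  obtain ⟨F₀, hF₀⟩ := exists_net f hf w (half_pos hε)
  have hF₀span : rSpan f w (ε / 2) r F₀ := net_rSpan f hr hw hF₀
  have hkey : Qw0 f φ w ε * B⁻¹ ≤ Qw f φ w (ε / 2) r := by
    refine le_csInf ⟨_, F₀, hF₀span, rfl⟩ ?_
    rintro t ⟨F, hFspan, rfl⟩
    have h1 : Qw0 f φ w ε ≤ B * ∑ z ∈ F, Real.exp (Sw f φ w z) :=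
      le_trans hQw0E (sum_sep_le f φ hε hr hx0 hx1 hM0 hM hV0 hV s hsne hs w hEsep hFspan)
    calc Qw0 f φ w ε * B⁻¹ ≤ (B * ∑ z ∈ F, Real.exp (Sw f φ w z)) * B⁻¹ :=
          mul_le_mul_of_nonneg_right h1 (by positivity)
      _ = ∑ z ∈ F, Real.exp (Sw f φ w z) := by field_simp
  calc Qw0 f φ w ε = B * (Qw0 f φ w ε * B⁻¹) := by field_simp
    _ ≤ B * Qw f φ w (ε / 2) r := mul_le_mul_of_nonneg_left hkey hBpos.le

lemma Qn0_le_key (f : Fin m → X → X) (hf : ∀ i, Continuous (f i)) (φ : X → ℝ)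
    (hX : Nonempty X) {ε r x M V : ℝ}
    (hε : 0 < ε) (hr : 0 < r) (hx0 : 0 < x) (hx1 : x < 1)
    (hM0 : 0 ≤ M) (hM : ∀ z, |φ z| ≤ M) (hV0 : 0 ≤ V)
    (hV : ∀ a b : X, dist a b ≤ ε → |φ a - φ b| ≤ V)
    (s : Finset X) (hsne : s.Nonempty) (hs : ∀ z : X, ∃ c ∈ s, dist z c < ε / 2)
    {n : ℕ} (hn : 1 ≤ n) :
    Qn0 f φ n ε ≤
      (x⁻¹ ^ ⌊r * n⌋₊ * (1 - x)⁻¹ ^ (n + 1) * (s.card : ℝ) ^ ⌊r * n⌋₊ *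
        Real.exp (n * V + 2 * M * ⌊r * n⌋₊)) * Qn f φ n (ε / 2) r := by
  set B : ℝ := x⁻¹ ^ ⌊r * n⌋₊ * (1 - x)⁻¹ ^ (n + 1) * (s.card : ℝ) ^ ⌊r * n⌋₊ *
      Real.exp (n * V + 2 * M * ⌊r * n⌋₊) with hB
  rw [Qn0, Qn]
  have hsum : ∑ σ : Fin n → Fin m, Qw0 f φ (List.ofFn σ) ε
      ≤ ∑ σ : Fin n → Fin m, B * Qw f φ (List.ofFn σ) (ε / 2) r := by
    refine Finset.sum_le_sum fun σ _ => ?_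
    have hlen : (List.ofFn σ).length = n := List.length_ofFn
    have := Qw0_le_key f hf φ hX hε hr hx0 hx1 hM0 hM hV0 hV s hsne hs
      (w := List.ofFn σ) (by rw [hlen]; exact hn)
    rw [hlen] at this
    exact this
  have hfac : (0:ℝ) ≤ 1 / (Fintype.card (Fin m) : ℝ) ^ n := by positivity
  calc (1 / (Fintype.card (Fin m) : ℝ) ^ n) * ∑ σ : Fin n → Fin m, Qw0 f φ (List.ofFn σ) ε
      ≤ (1 / (Fintype.card (Fin m) : ℝ) ^ n)
          * ∑ σ : Fin n → Fin m, B * Qw f φ (List.ofFn σ) (ε / 2) r :=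
        mul_le_mul_of_nonneg_left hsum hfac
    _ = B * ((1 / (Fintype.card (Fin m) : ℝ) ^ n)
          * ∑ σ : Fin n → Fin m, Qw f φ (List.ofFn σ) (ε / 2) r) := by
        rw [← Finset.mul_sum]; ring

lemma Qn0_lower (f : Fin m → X → X) (hf : ∀ i, Continuous (f i)) (φ : X → ℝ)
    (hX : Nonempty X) (hm : 0 < m) {M ε : ℝ} (hM : ∀ z, |φ z| ≤ M) (hε : 0 < ε) (n : ℕ) :
    Real.exp (-(n * M)) ≤ Qn0 f φ n ε := by
  rw [Qn0]
  have hcard : (Finset.univ : Finset (Fin n → Fin m)).card = m ^ n := by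
    rw [Finset.card_univ, Fintype.card_fun]
    simp
  have hmpos : (0:ℝ) < (m:ℝ) ^ n := by positivity
  have hsum : (m:ℝ) ^ n * Real.exp (-(n * M))
      ≤ ∑ σ : Fin n → Fin m, Qw0 f φ (List.ofFn σ) ε := by
    have h1 : ∀ σ : Fin n → Fin m, σ ∈ Finset.univ →
        Real.exp (-(n * M)) ≤ Qw0 f φ (List.ofFn σ) ε := by
      intro σ _
      have := Qw0_lower f hf φ hX hM hε (List.ofFn σ)
      rwa [List.length_ofFn] at this
    calc (m:ℝ) ^ n * Real.exp (-(n * M))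
        = (Finset.univ : Finset (Fin n → Fin m)).card • Real.exp (-(n * M)) := by
          rw [hcard, nsmul_eq_mul]; push_cast; ring
      _ ≤ ∑ σ : Fin n → Fin m, Qw0 f φ (List.ofFn σ) ε := Finset.card_nsmul_le_sum _ _ _ h1
  have hcf : (Fintype.card (Fin m) : ℝ) = m := by simp
  calc Real.exp (-(n * M)) = (1 / (m:ℝ) ^ n) * ((m:ℝ) ^ n * Real.exp (-(n * M))) := by
        field_simp
    _ ≤ (1 / (m:ℝ) ^ n) * ∑ σ : Fin n → Fin m, Qw0 f φ (List.ofFn σ) ε :=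
        mul_le_mul_of_nonneg_left hsum (by positivity)
    _ = (1 / (Fintype.card (Fin m) : ℝ) ^ n) * ∑ σ : Fin n → Fin m, Qw0 f φ (List.ofFn σ) ε := by
        rw [hcf]

lemma Qn_lower (f : Fin m → X → X) (hf : ∀ i, Continuous (f i)) (φ : X → ℝ)
    (hX : Nonempty X) (hm : 0 < m) {M ε r : ℝ} (hM : ∀ z, |φ z| ≤ M) (hε : 0 < ε)
    (hr : 0 < r) {n : ℕ} (hn : 1 ≤ n) :
    Real.exp (-(n * M)) ≤ Qn f φ n ε r := by
  rw [Qn]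
  have hcard : (Finset.univ : Finset (Fin n → Fin m)).card = m ^ n := by
    rw [Finset.card_univ, Fintype.card_fun]
    simp
  have hsum : (m:ℝ) ^ n * Real.exp (-(n * M))
      ≤ ∑ σ : Fin n → Fin m, Qw f φ (List.ofFn σ) ε r := by
    have h1 : ∀ σ : Fin n → Fin m, σ ∈ Finset.univ →
        Real.exp (-(n * M)) ≤ Qw f φ (List.ofFn σ) ε r := by
      intro σ _
      have := Qw_lower f hf φ hX hM hε hr (w := List.ofFn σ)
        (by rw [List.length_ofFn]; exact hn)
      rwa [List.length_ofFn] at this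
    calc (m:ℝ) ^ n * Real.exp (-(n * M))
        = (Finset.univ : Finset (Fin n → Fin m)).card • Real.exp (-(n * M)) := by
          rw [hcard, nsmul_eq_mul]; push_cast; ring
      _ ≤ _ := Finset.card_nsmul_le_sum _ _ _ h1
  have hcf : (Fintype.card (Fin m) : ℝ) = m := by simp
  calc Real.exp (-(n * M)) = (1 / (m:ℝ) ^ n) * ((m:ℝ) ^ n * Real.exp (-(n * M))) := by
        field_simp
    _ ≤ (1 / (m:ℝ) ^ n) * ∑ σ : Fin n → Fin m, Qw f φ (List.ofFn σ) ε r :=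
        mul_le_mul_of_nonneg_left hsum (by positivity)
    _ = (1 / (Fintype.card (Fin m) : ℝ) ^ n) * ∑ σ : Fin n → Fin m, Qw f φ (List.ofFn σ) ε r := by
        rw [hcf]

lemma Qn_le_Qn0 (f : Fin m → X → X) (hf : ∀ i, Continuous (f i)) (φ : X → ℝ)
    {ε ε' r : ℝ} (hε' : 0 < ε') (hee : ε' < ε) (hr : 0 < r) {n : ℕ} (hn : 1 ≤ n) :
    Qn f φ n ε r ≤ Qn0 f φ n ε' := by
  rw [Qn, Qn0]
  refine mul_le_mul_of_nonneg_left ?_ (by positivity)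
  refine Finset.sum_le_sum fun σ _ => ?_
  exact Qw_le_Qw0 f hf φ hε' hee hr (by rw [List.length_ofFn]; exact hn)

lemma Qn0_anti (f : Fin m → X → X) (hf : ∀ i, Continuous (f i)) (φ : X → ℝ)
    {ε ε' : ℝ} (hε : 0 < ε) (hee : ε ≤ ε') (n : ℕ) :
    Qn0 f φ n ε' ≤ Qn0 f φ n ε := by
  rw [Qn0, Qn0]
  refine mul_le_mul_of_nonneg_left ?_ (by positivity)
  exact Finset.sum_le_sum fun σ _ => Qw0_anti f hf φ hε hee (List.ofFn σ)

end AuxProofs5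
section AuxProofs6

open Real Filter

variable {X : Type*} [MetricSpace X] [CompactSpace X] {m : ℕ}

lemma pointwise_log (f : Fin m → X → X) (hf : ∀ i, Continuous (f i)) (φ : X → ℝ)
    (hX : Nonempty X) (hm : 0 < m) {ε r x M V : ℝ}
    (hε : 0 < ε) (hr : 0 < r) (hx0 : 0 < x) (hx1 : x < 1)
    (hM0 : 0 ≤ M) (hM : ∀ z, |φ z| ≤ M) (hV0 : 0 ≤ V)
    (hV : ∀ a b : X, dist a b ≤ ε → |φ a - φ b| ≤ V)
    (s : Finset X) (hsne : s.Nonempty) (hs : ∀ z : X, ∃ c ∈ s, dist z c < ε / 2)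
    {n : ℕ} (hn : 1 ≤ n) :
    (n : ℝ)⁻¹ * Real.log (Qn0 f φ n ε) ≤
      (r * Real.log x⁻¹ + 2 * Real.log (1 - x)⁻¹ + r * Real.log (s.card : ℝ) + V + 2 * M * r)
      + (n : ℝ)⁻¹ * Real.log (Qn f φ n (ε / 2) r) := by
  set k := ⌊r * (n:ℝ)⌋₊ with hk
  set B : ℝ := x⁻¹ ^ k * (1 - x)⁻¹ ^ (n + 1) * (s.card : ℝ) ^ k *
      Real.exp (n * V + 2 * M * k) with hB
  have h1x : (0:ℝ) < 1 - x := by linarith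
  have hscard : (1:ℝ) ≤ (s.card : ℝ) := by exact_mod_cast Finset.card_pos.2 hsne
  have hBpos : 0 < B := by rw [hB]; positivity
  have hQn0pos : 0 < Qn0 f φ n ε :=
    lt_of_lt_of_le (Real.exp_pos _) (Qn0_lower f hf φ hX hm hM hε n)
  have hQnpos : 0 < Qn f φ n (ε / 2) r :=
    lt_of_lt_of_le (Real.exp_pos _) (Qn_lower f hf φ hX hm hM (half_pos hε) hr hn)
  have hkey : Qn0 f φ n ε ≤ B * Qn f φ n (ε / 2) r :=
    Qn0_le_key f hf φ hX hε hr hx0 hx1 hM0 hM hV0 hV s hsne hs hn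
  have hlog : Real.log (Qn0 f φ n ε) ≤ Real.log B + Real.log (Qn f φ n (ε / 2) r) := by
    calc Real.log (Qn0 f φ n ε) ≤ Real.log (B * Qn f φ n (ε / 2) r) :=
          Real.log_le_log hQn0pos hkey
      _ = Real.log B + Real.log (Qn f φ n (ε / 2) r) :=
          Real.log_mul hBpos.ne' hQnpos.ne'
  have hlogB : Real.log B = k * Real.log x⁻¹ + (n + 1) * Real.log (1 - x)⁻¹
      + k * Real.log (s.card : ℝ) + (n * V + 2 * M * k) := by
    rw [hB, Real.log_mul (by positivity) (Real.exp_ne_zero _),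
      Real.log_mul (by positivity) (by positivity),
      Real.log_mul (by positivity) (by positivity),
      Real.log_pow, Real.log_pow, Real.log_pow, Real.log_exp]
    push_cast
    ring
  have hn0 : (0:ℝ) < n := by exact_mod_cast hn
  have hnR : (1:ℝ) ≤ n := by exact_mod_cast hn
  have hkrn : (k:ℝ) ≤ r * n := Nat.floor_le (by positivity)
  have hlx : 0 ≤ Real.log x⁻¹ := by
    apply Real.log_nonneg
    rw [le_inv_comm₀ one_pos hx0]
    norm_num
    linarith
  have hl1x : 0 ≤ Real.log (1 - x)⁻¹ := by
    apply Real.log_nonneg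
    rw [le_inv_comm₀ one_pos h1x]
    norm_num
    linarith
  have hlN : 0 ≤ Real.log (s.card : ℝ) := Real.log_nonneg hscard
  have hmain : (n : ℝ)⁻¹ * Real.log B ≤
      r * Real.log x⁻¹ + 2 * Real.log (1 - x)⁻¹ + r * Real.log (s.card : ℝ) + V + 2 * M * r := by
    rw [hlogB, inv_mul_le_iff₀ hn0]
    have hint1 : (k:ℝ) * Real.log x⁻¹ ≤ (r * n) * Real.log x⁻¹ :=
      mul_le_mul_of_nonneg_right hkrn hlx
    have hint2 : ((n:ℝ) + 1) * Real.log (1 - x)⁻¹ ≤ (2 * n) * Real.log (1 - x)⁻¹ :=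
      mul_le_mul_of_nonneg_right (by linarith) hl1x
    have hint3 : (k:ℝ) * Real.log (s.card : ℝ) ≤ (r * n) * Real.log (s.card : ℝ) :=
      mul_le_mul_of_nonneg_right hkrn hlN
    have hint4 : 2 * M * (k:ℝ) ≤ 2 * M * (r * n) :=
      mul_le_mul_of_nonneg_left hkrn (by linarith)
    nlinarith [hint1, hint2, hint3, hint4]
  have hexp : (n : ℝ)⁻¹ * Real.log (Qn0 f φ n ε)
      ≤ (n : ℝ)⁻¹ * Real.log B + (n : ℝ)⁻¹ * Real.log (Qn f φ n (ε / 2) r) := by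
    have := mul_le_mul_of_nonneg_left hlog (by positivity : (0:ℝ) ≤ (n:ℝ)⁻¹)
    rw [mul_add] at this
    exact this
  linarith

lemma pointwise_log_upper (f : Fin m → X → X) (hf : ∀ i, Continuous (f i)) (φ : X → ℝ)
    (hX : Nonempty X) (hm : 0 < m) {ε r M : ℝ}
    (hε : 0 < ε) (hr : 0 < r) (hM : ∀ z, |φ z| ≤ M) {n : ℕ} (hn : 1 ≤ n) :
    (n : ℝ)⁻¹ * Real.log (Qn f φ n ε r) ≤ (n : ℝ)⁻¹ * Real.log (Qn0 f φ n (ε / 2)) := by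
  have hQnpos : 0 < Qn f φ n ε r :=
    lt_of_lt_of_le (Real.exp_pos _) (Qn_lower f hf φ hX hm hM hε hr hn)
  have h := Qn_le_Qn0 f hf φ (half_pos hε) (half_lt_self hε) hr hn
  exact mul_le_mul_of_nonneg_left (Real.log_le_log hQnpos h) (by positivity)

end AuxProofs6
section AuxProofs7

open Real Filter

variable {X : Type*} [MetricSpace X] [CompactSpace X] {m : ℕ}

lemma limsup_zero_seq (Q : ℕ → ℝ) (hQ : ∀ n : ℕ, 1 ≤ n → Q n = 0) :
    atTop.limsup (fun n : ℕ => (((n : ℝ)⁻¹ * Real.log (Q n) : ℝ) : EReal)) = 0 := by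
  have hcong : ∀ᶠ n : ℕ in atTop,
      (((n : ℝ)⁻¹ * Real.log (Q n) : ℝ) : EReal) = (fun _ : ℕ => (0 : EReal)) n := by
    filter_upwards [eventually_ge_atTop 1] with n hn
    rw [hQ n hn, Real.log_zero, mul_zero]
    exact EReal.coe_zero
  rw [limsup_congr hcong, limsup_const]

lemma biSup_zero : (⨆ ε ∈ Set.Ioi (0 : ℝ), (0 : EReal)) = 0 := by
  refine le_antisymm (iSup₂_le fun _ _ => le_rfl) ?_
  exact le_iSup₂_of_le 1 (Set.mem_Ioi.2 one_pos) le_rfl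

lemma Qw_of_isEmpty [IsEmpty X] (f : Fin m → X → X) (φ : X → ℝ) (w : List (Fin m)) (ε r : ℝ) :
    Qw f φ w ε r = 0 := by
  have hset : {s : ℝ | ∃ F : Finset X, rSpan f w ε r F ∧ s = ∑ x ∈ F, Real.exp (Sw f φ w x)}
      = {0} := by
    ext t
    simp only [Set.mem_setOf_eq, Set.mem_singleton_iff]
    constructor
    · rintro ⟨F, _, rfl⟩
      have hF : F = ∅ := Finset.eq_empty_of_isEmpty F
      simp [hF]
    · rintro rfl
      exact ⟨∅, fun z => isEmptyElim z, by simp⟩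
  rw [Qw, hset, csInf_singleton]

lemma Qw0_of_isEmpty [IsEmpty X] (f : Fin m → X → X) (φ : X → ℝ) (w : List (Fin m)) (ε : ℝ) :
    Qw0 f φ w ε = 0 := by
  have hset : {s : ℝ | ∃ F : Finset X, span0 f w ε F ∧ s = ∑ x ∈ F, Real.exp (Sw f φ w x)}
      = {0} := by
    ext t
    simp only [Set.mem_setOf_eq, Set.mem_singleton_iff]
    constructor
    · rintro ⟨F, _, rfl⟩
      have hF : F = ∅ := Finset.eq_empty_of_isEmpty F
      simp [hF]
    · rintro rfl
      exact ⟨∅, fun z => isEmptyElim z, by simp⟩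
  rw [Qw0, hset, csInf_singleton]

lemma Qn_deg (f : Fin m → X → X) (φ : X → ℝ) (h : m = 0 ∨ IsEmpty X)
    (ε r : ℝ) {n : ℕ} (hn : 1 ≤ n) : Qn f φ n ε r = 0 := by
  rcases h with hm | hX
  · subst hm
    haveI : IsEmpty (Fin n → Fin 0) := ⟨fun g => (g ⟨0, hn⟩).elim0⟩
    rw [Qn, Finset.univ_eq_empty, Finset.sum_empty, mul_zero]
  · rw [Qn]
    have : ∀ σ : Fin n → Fin m, Qw f φ (List.ofFn σ) ε r = 0 :=
      fun σ => Qw_of_isEmpty f φ _ ε r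
    rw [Finset.sum_congr rfl fun σ _ => this σ, Finset.sum_const_zero, mul_zero]

lemma Qn0_deg (f : Fin m → X → X) (φ : X → ℝ) (h : m = 0 ∨ IsEmpty X)
    (ε : ℝ) {n : ℕ} (hn : 1 ≤ n) : Qn0 f φ n ε = 0 := by
  rcases h with hm | hX
  · subst hm
    haveI : IsEmpty (Fin n → Fin 0) := ⟨fun g => (g ⟨0, hn⟩).elim0⟩
    rw [Qn0, Finset.univ_eq_empty, Finset.sum_empty, mul_zero]
  · rw [Qn0]
    have : ∀ σ : Fin n → Fin m, Qw0 f φ (List.ofFn σ) ε = 0 :=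
      fun σ => Qw0_of_isEmpty f φ _ ε
    rw [Finset.sum_congr rfl fun σ _ => this σ, Finset.sum_const_zero, mul_zero]

lemma Pr_deg (f : Fin m → X → X) (φ : X → ℝ) (h : m = 0 ∨ IsEmpty X) (r : ℝ) :
    Pr f φ r = 0 := by
  rw [Pr]
  have : ∀ ε ∈ Set.Ioi (0:ℝ),
      atTop.limsup (fun n : ℕ => (((n : ℝ)⁻¹ * Real.log (Qn f φ n ε r) : ℝ) : EReal)) = 0 :=
    fun ε _ => limsup_zero_seq _ (fun n hn => Qn_deg f φ h ε r hn)
  calc (⨆ ε ∈ Set.Ioi (0:ℝ),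
        atTop.limsup (fun n : ℕ => (((n : ℝ)⁻¹ * Real.log (Qn f φ n ε r) : ℝ) : EReal)))
      = ⨆ ε ∈ Set.Ioi (0:ℝ), (0 : EReal) := by
        refine biSup_congr ?_
        intro ε hε
        exact this ε hε
    _ = 0 := biSup_zero

lemma P0_deg (f : Fin m → X → X) (φ : X → ℝ) (h : m = 0 ∨ IsEmpty X) :
    P0 f φ = 0 := by
  rw [P0]
  have : ∀ ε ∈ Set.Ioi (0:ℝ),
      atTop.limsup (fun n : ℕ => (((n : ℝ)⁻¹ * Real.log (Qn0 f φ n ε) : ℝ) : EReal)) = 0 :=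
    fun ε _ => limsup_zero_seq _ (fun n hn => Qn0_deg f φ h ε hn)
  calc (⨆ ε ∈ Set.Ioi (0:ℝ),
        atTop.limsup (fun n : ℕ => (((n : ℝ)⁻¹ * Real.log (Qn0 f φ n ε) : ℝ) : EReal)))
      = ⨆ ε ∈ Set.Ioi (0:ℝ), (0 : EReal) := by
        refine biSup_congr ?_
        intro ε hε
        exact this ε hε
    _ = 0 := biSup_zero

end AuxProofs7
section AuxProofs8

open Real Filter

variable {X : Type*} [MetricSpace X] [CompactSpace X] {m : ℕ}

lemma Pr_le_P0 (f : Fin m → X → X) (hf : ∀ i, Continuous (f i)) (φ : X → ℝ)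
    (hX : Nonempty X) (hm : 0 < m) {M : ℝ} (hM : ∀ z, |φ z| ≤ M)
    {r : ℝ} (hr : 0 < r) : Pr f φ r ≤ P0 f φ := by
  rw [Pr, P0]
  refine iSup₂_le fun ε hε => ?_
  rw [Set.mem_Ioi] at hε
  have hmono : atTop.limsup (fun n : ℕ => (((n : ℝ)⁻¹ * Real.log (Qn f φ n ε r) : ℝ) : EReal))
      ≤ atTop.limsup (fun n : ℕ =>
        (((n : ℝ)⁻¹ * Real.log (Qn0 f φ n (ε / 2)) : ℝ) : EReal)) := by
    refine limsup_le_limsup ?_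
    filter_upwards [eventually_ge_atTop 1] with n hn
    exact EReal.coe_le_coe_iff.2 (pointwise_log_upper f hf φ hX hm hε hr hM hn)
  refine le_trans hmono ?_
  exact le_iSup₂ (f := fun ε' (_ : ε' ∈ Set.Ioi (0:ℝ)) => atTop.limsup fun n : ℕ =>
    (((n : ℝ)⁻¹ * Real.log (Qn0 f φ n ε') : ℝ) : EReal)) (ε / 2)
    (Set.mem_Ioi.2 (half_pos hε))

lemma L0_le_Pr_add (f : Fin m → X → X) (hf : ∀ i, Continuous (f i)) (φ : X → ℝ)
    (hX : Nonempty X) (hm : 0 < m) {ε r x M V : ℝ}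
    (hε : 0 < ε) (hr : 0 < r) (hx0 : 0 < x) (hx1 : x < 1)
    (hM0 : 0 ≤ M) (hM : ∀ z, |φ z| ≤ M) (hV0 : 0 ≤ V)
    (hV : ∀ a b : X, dist a b ≤ ε → |φ a - φ b| ≤ V)
    (s : Finset X) (hsne : s.Nonempty) (hs : ∀ z : X, ∃ c ∈ s, dist z c < ε / 2) :
    atTop.limsup (fun n : ℕ => (((n : ℝ)⁻¹ * Real.log (Qn0 f φ n ε) : ℝ) : EReal))
      ≤ Pr f φ r + ((r * Real.log x⁻¹ + 2 * Real.log (1 - x)⁻¹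
          + r * Real.log (s.card : ℝ) + V + 2 * M * r : ℝ) : EReal) := by
  set c' : ℝ := r * Real.log x⁻¹ + 2 * Real.log (1 - x)⁻¹
      + r * Real.log (s.card : ℝ) + V + 2 * M * r with hc'
  set v : ℕ → EReal := fun n => (((n : ℝ)⁻¹ * Real.log (Qn f φ n (ε / 2) r) : ℝ) : EReal)
    with hv
  have h1 : atTop.limsup (fun n : ℕ => (((n : ℝ)⁻¹ * Real.log (Qn0 f φ n ε) : ℝ) : EReal))
      ≤ atTop.limsup (v + fun _ : ℕ => (c' : EReal)) := by
    refine limsup_le_limsup ?_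
    filter_upwards [eventually_ge_atTop 1] with n hn
    show (((n : ℝ)⁻¹ * Real.log (Qn0 f φ n ε) : ℝ) : EReal) ≤ v n + (c' : EReal)
    rw [hv]
    rw [show ((((n : ℝ)⁻¹ * Real.log (Qn f φ n (ε / 2) r) : ℝ) : EReal) + (c' : EReal))
      = ((((n : ℝ)⁻¹ * Real.log (Qn f φ n (ε / 2) r) + c' : ℝ)) : EReal) from
      (EReal.coe_add _ _).symm]
    refine EReal.coe_le_coe_iff.2 ?_
    have := pointwise_log f hf φ hX hm hε hr hx0 hx1 hM0 hM hV0 hV s hsne hs hn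
    rw [← hc'] at this
    linarith
  have hc : atTop.limsup (fun _ : ℕ => (c' : EReal)) = (c' : EReal) := limsup_const _
  have h2 : atTop.limsup (v + fun _ : ℕ => (c' : EReal))
      ≤ atTop.limsup v + (c' : EReal) := by
    have h := EReal.limsup_add_le (f := atTop) (u := v) (v := fun _ : ℕ => (c' : EReal))
      (by right; rw [hc]; exact EReal.coe_ne_top _)
      (by right; rw [hc]; exact EReal.coe_ne_bot _)
    rwa [hc] at h
  have h3 : atTop.limsup v ≤ Pr f φ r := by
    rw [Pr, hv]
    exact le_iSup₂ (f := fun ε' (_ : ε' ∈ Set.Ioi (0:ℝ)) => atTop.limsup fun n : ℕ =>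
      (((n : ℝ)⁻¹ * Real.log (Qn f φ n ε' r) : ℝ) : EReal)) (ε / 2)
      (Set.mem_Ioi.2 (half_pos hε))
  calc atTop.limsup (fun n : ℕ => (((n : ℝ)⁻¹ * Real.log (Qn0 f φ n ε) : ℝ) : EReal))
      ≤ atTop.limsup (v + fun _ : ℕ => (c' : EReal)) := h1
    _ ≤ atTop.limsup v + (c' : EReal) := h2
    _ ≤ Pr f φ r + (c' : EReal) := add_le_add h3 le_rfl

lemma L0_anti (f : Fin m → X → X) (hf : ∀ i, Continuous (f i)) (φ : X → ℝ)
    (hX : Nonempty X) (hm : 0 < m) {M : ℝ} (hM : ∀ z, |φ z| ≤ M)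
    {ε ε' : ℝ} (hε : 0 < ε) (hee : ε ≤ ε') :
    atTop.limsup (fun n : ℕ => (((n : ℝ)⁻¹ * Real.log (Qn0 f φ n ε') : ℝ) : EReal))
      ≤ atTop.limsup (fun n : ℕ => (((n : ℝ)⁻¹ * Real.log (Qn0 f φ n ε) : ℝ) : EReal)) := by
  refine limsup_le_limsup ?_
  filter_upwards [eventually_ge_atTop 1] with n hn
  refine EReal.coe_le_coe_iff.2 ?_
  have hpos : 0 < Qn0 f φ n ε' :=
    lt_of_lt_of_le (Real.exp_pos _) (Qn0_lower f hf φ hX hm hM (lt_of_lt_of_le hε hee) n)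
  exact mul_le_mul_of_nonneg_left
    (Real.log_le_log hpos (Qn0_anti f hf φ hε hee n)) (by positivity)

end AuxProofs8

theorem tendsto_Pr_pressure
    {X : Type*} [MetricSpace X] [CompactSpace X] {m : ℕ}
    (f : Fin m → X → X) (hf : ∀ i, Continuous (f i))
    (φ : X → ℝ) (hφ : Continuous φ) :
    Filter.Tendsto (fun r : ℝ => Pr f φ r)
      (nhdsWithin (0 : ℝ) (Set.Ioi 0)) (nhds (P0 f φ)) := by
  rcases Nat.eq_zero_or_pos m with hm0 | hm
  · have h : m = 0 ∨ IsEmpty X := Or.inl hm0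
    rw [P0_deg f φ h]
    have heq : (fun r : ℝ => Pr f φ r) = fun _ => (0 : EReal) :=
      funext fun r => Pr_deg f φ h r
    rw [heq]
    exact tendsto_const_nhds
  rcases isEmpty_or_nonempty X with hX | hX
  · have h : m = 0 ∨ IsEmpty X := Or.inr hX
    rw [P0_deg f φ h]
    have heq : (fun r : ℝ => Pr f φ r) = fun _ => (0 : EReal) :=
      funext fun r => Pr_deg f φ h r
    rw [heq]
    exact tendsto_const_nhds
  -- main case
  obtain ⟨C, hC⟩ := IsCompact.exists_bound_of_continuousOn isCompact_univ hφ.continuousOn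
  set M : ℝ := max C 0 with hMdef
  have hM : ∀ z : X, |φ z| ≤ M := by
    intro z
    have := hC z (Set.mem_univ z)
    rw [Real.norm_eq_abs] at this
    exact le_trans this (le_max_left _ _)
  have hM0 : (0:ℝ) ≤ M := le_max_right _ _
  rw [tendsto_order]
  constructor
  · intro b hb
    rw [P0] at hb
    rw [lt_iSup_iff] at hb
    obtain ⟨ε₁, hb⟩ := hb
    rw [lt_iSup_iff] at hb
    obtain ⟨hε₁, hb⟩ := hb
    rw [Set.mem_Ioi] at hε₁
    obtain ⟨γ, hbγ, hγ⟩ := EReal.exists_between_coe_real hb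
    obtain ⟨β, hbβ, hβγ⟩ := EReal.exists_between_coe_real hbγ
    have hβγ' : β < γ := by exact_mod_cast hβγ
    set η : ℝ := (γ - β) / 3 with hη
    have hη0 : 0 < η := by rw [hη]; linarith
    have huc : UniformContinuous φ := CompactSpace.uniformContinuous_of_continuous hφ
    obtain ⟨δ, hδ0, hδ⟩ := Metric.uniformContinuous_iff.1 huc η hη0
    set ε : ℝ := min ε₁ (δ / 2) with hεdef
    have hε0 : 0 < ε := lt_min hε₁ (by linarith)
    have hV : ∀ a b : X, dist a b ≤ ε → |φ a - φ b| ≤ η := by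
      intro a b hab
      have h1 : dist a b < δ :=
        lt_of_le_of_lt hab (lt_of_le_of_lt (min_le_right _ _) (by linarith))
      have h2 := hδ h1
      rw [Real.dist_eq] at h2
      linarith
    obtain ⟨s, hs'⟩ := exists_net f hf [⟨0, hm⟩] (half_pos hε0)
    have hs : ∀ z : X, ∃ c ∈ s, dist z c < ε / 2 := by
      intro z
      obtain ⟨y, hy, hd⟩ := hs' z
      refine ⟨y, hy, ?_⟩
      have := hd 0 (by simp)
      simpa [fw] using this
    have hsne : s.Nonempty := by
      obtain ⟨c, hc', -⟩ := hs (Classical.arbitrary X)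
      exact ⟨c, hc'⟩
    set x : ℝ := 1 - Real.exp (-(η / 2)) with hxdef
    have hexpeta : Real.exp (-(η / 2)) < 1 := by
      rw [Real.exp_lt_one_iff]
      linarith
    have hx0 : 0 < x := by rw [hxdef]; linarith
    have hx1 : x < 1 := by
      rw [hxdef]
      have := Real.exp_pos (-(η / 2))
      linarith
    have h1x : (1:ℝ) - x = Real.exp (-(η / 2)) := by rw [hxdef]; ring
    have hlog1x : Real.log (1 - x)⁻¹ = η / 2 := by
      rw [h1x, ← Real.exp_neg, neg_neg, Real.log_exp]
    have hlx : 0 ≤ Real.log x⁻¹ := by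
      apply Real.log_nonneg
      rw [le_inv_comm₀ one_pos hx0]
      norm_num
      linarith
    have hlN : 0 ≤ Real.log (s.card : ℝ) := by
      apply Real.log_nonneg
      exact_mod_cast Finset.card_pos.2 hsne
    set S : ℝ := Real.log x⁻¹ + Real.log (s.card : ℝ) + 2 * M with hSdef
    have hS0 : 0 ≤ S := by rw [hSdef]; linarith
    set r0 : ℝ := η / (S + 1) with hr0def
    have hr00 : 0 < r0 := div_pos hη0 (by linarith)
    have hev : Set.Ioo (0:ℝ) r0 ∈ nhdsWithin (0:ℝ) (Set.Ioi 0) :=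
      Ioo_mem_nhdsGT_of_mem ⟨le_refl 0, hr00⟩
    filter_upwards [hev] with r hrmem
    obtain ⟨hr0r, hrr0⟩ := hrmem
    set c' : ℝ := r * Real.log x⁻¹ + 2 * Real.log (1 - x)⁻¹
        + r * Real.log (s.card : ℝ) + η + 2 * M * r with hc'def
    have hL2 : atTop.limsup (fun n : ℕ =>
          (((n : ℝ)⁻¹ * Real.log (Qn0 f φ n ε₁) : ℝ) : EReal))
        ≤ atTop.limsup (fun n : ℕ =>
          (((n : ℝ)⁻¹ * Real.log (Qn0 f φ n ε) : ℝ) : EReal)) :=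
      L0_anti f hf φ hX hm hM hε0 (min_le_left _ _)
    have hL3 : atTop.limsup (fun n : ℕ =>
          (((n : ℝ)⁻¹ * Real.log (Qn0 f φ n ε) : ℝ) : EReal))
        ≤ Pr f φ r + (c' : EReal) :=
      L0_le_Pr_add f hf φ hX hm hε0 hr0r hx0 hx1 hM0 hM hη0.le hV s hsne hs
    have hc'le : c' ≤ γ - β := by
      have h1 : r * S ≤ r0 * S := mul_le_mul_of_nonneg_right hrr0.le hS0
      have h2 : r0 * S ≤ η := by
        rw [hr0def, div_mul_eq_mul_div, div_le_iff₀ (by linarith : (0:ℝ) < S + 1)]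
        nlinarith
      have h3 : r * S = r * Real.log x⁻¹ + r * Real.log (s.card : ℝ) + 2 * M * r := by
        rw [hSdef]; ring
      rw [hc'def, hlog1x]
      have hη3 : γ - β = 3 * η := by rw [hη]; ring
      have h4 : r * Real.log x⁻¹ + r * Real.log (s.card : ℝ) + 2 * M * r ≤ η := by
        rw [← h3]; exact le_trans h1 h2
      linarith
    by_contra hcon
    push_neg at hcon
    have hchain : ((γ : ℝ) : EReal) < ((γ : ℝ) : EReal) := by
      calc ((γ : ℝ) : EReal)
          < atTop.limsup (fun n : ℕ =>
              (((n : ℝ)⁻¹ * Real.log (Qn0 f φ n ε₁) : ℝ) : EReal)) := hγ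
        _ ≤ atTop.limsup (fun n : ℕ =>
              (((n : ℝ)⁻¹ * Real.log (Qn0 f φ n ε) : ℝ) : EReal)) := hL2
        _ ≤ Pr f φ r + (c' : EReal) := hL3
        _ ≤ ((β : ℝ) : EReal) + (c' : EReal) :=
            add_le_add (le_trans hcon hbβ.le) le_rfl
        _ = ((β + c' : ℝ) : EReal) := (EReal.coe_add _ _).symm
        _ ≤ ((γ : ℝ) : EReal) := EReal.coe_le_coe_iff.2 (by linarith)
    exact lt_irrefl _ hchain
  · intro b hb
    filter_upwards [self_mem_nhdsWithin] with r hr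
    rw [Set.mem_Ioi] at hr
    exact lt_of_le_of_lt (Pr_le_P0 f hf φ hX hm hM hr) hb
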